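/- For all integers j, k ≥ 2, there exist g, h ∈ Lie(ℱ) such that (tr A^j)² agrees with g and (tr B^k)² agrees with h at every point of Ŝ_n. -/

import Mathlib

open MvPolynomial Matrix

/-- Polynomial functions on `M_n(ℂ) × M_n(ℂ)`, represented as polynomials in the
entries of the two matrices. -/
abbrev PolyFun (n : ℕ) := MvPolynomial ((Fin n × Fin n) ⊕ (Fin n × Fin n)) ℂ

/-- The matrix of coordinate functions `X_{jk}`. -/
noncomputable def Xmat (n : ℕ) : Matrix (Fin n) (Fin n) (PolyFun n) :=
  fun i j => MvPolynomial.X (Sum.inl (i, j))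

/-- The matrix of coordinate functions `Y_{jk}`. -/
noncomputable def Ymat (n : ℕ) : Matrix (Fin n) (Fin n) (PolyFun n) :=
  fun i j => MvPolynomial.X (Sum.inr (i, j))

/-- Traceless part `A = X - (tr X / n) I_n`. -/
noncomputable def Amat (n : ℕ) : Matrix (Fin n) (Fin n) (PolyFun n) :=
  Xmat n - (MvPolynomial.C ((n : ℂ)⁻¹) * Matrix.trace (Xmat n)) • (1 : Matrix (Fin n) (Fin n) (PolyFun n))

/-- Traceless part `B = Y - (tr Y / n) I_n`. -/
noncomputable def Bmat (n : ℕ) : Matrix (Fin n) (Fin n) (PolyFun n) :=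
  Ymat n - (MvPolynomial.C ((n : ℂ)⁻¹) * Matrix.trace (Ymat n)) • (1 : Matrix (Fin n) (Fin n) (PolyFun n))

/-- The polynomial function `(X,Y) ↦ tr (A^p B^q)`. -/
noncomputable def trAB (n p q : ℕ) : PolyFun n :=
  Matrix.trace (Amat n ^ p * Bmat n ^ q)

/-- The polynomial function `(X,Y) ↦ tr (X^a Y^b)`. -/
noncomputable def trXY (n a b : ℕ) : PolyFun n :=
  Matrix.trace (Xmat n ^ a * Ymat n ^ b)

/-- The Poisson bracket
`{F,G} = Σ_{j,k} ∂F/∂X_{jk} ∂G/∂Y_{kj} − ∂F/∂Y_{jk} ∂G/∂X_{kj}`. -/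
noncomputable def pbracket {n : ℕ} (F G : PolyFun n) : PolyFun n :=
  ∑ j : Fin n, ∑ k : Fin n,
    (MvPolynomial.pderiv (Sum.inl (j, k)) F * MvPolynomial.pderiv (Sum.inr (k, j)) G
      - MvPolynomial.pderiv (Sum.inr (j, k)) F * MvPolynomial.pderiv (Sum.inl (k, j)) G)

/-- Evaluation of a polynomial function at a pair of matrices. -/
noncomputable def evalP {n : ℕ} (X Y : Matrix (Fin n) (Fin n) ℂ) (F : PolyFun n) : ℂ :=
  MvPolynomial.eval (Sum.elim (fun p => X p.1 p.2) (fun p => Y p.1 p.2)) F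

/-- The Calogero–Moser variety `Ĉ_n = {(X,Y) : rank([X,Y] − i I_n) = 1}`. -/
def Chat (n : ℕ) : Set (Matrix (Fin n) (Fin n) ℂ × Matrix (Fin n) (Fin n) ℂ) :=
  {P | ((P.1 * P.2 - P.2 * P.1) - Complex.I • (1 : Matrix (Fin n) (Fin n) ℂ)).rank = 1}

/-- The traceless Calogero–Moser variety
`Ŝ_n = {(X,Y) : tr X = tr Y = 0, rank([X,Y] − i I_n) = 1}`. -/
def Shat (n : ℕ) : Set (Matrix (Fin n) (Fin n) ℂ × Matrix (Fin n) (Fin n) ℂ) :=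
  {P | Matrix.trace P.1 = 0 ∧ Matrix.trace P.2 = 0 ∧
    ((P.1 * P.2 - P.2 * P.1) - Complex.I • (1 : Matrix (Fin n) (Fin n) ℂ)).rank = 1}

/-- The set `ℱ = {tr A², tr B², tr A³, (tr AB)²}`. -/
noncomputable def calF (n : ℕ) : Set (PolyFun n) :=
  {trAB n 2 0, trAB n 0 2, trAB n 3 0, (trAB n 1 1) ^ 2}

/-- The smallest ℂ-linear subspace of the polynomial functions containing `S`
and closed under the Poisson bracket. -/
inductive LieGen (n : ℕ) (S : Set (PolyFun n)) : PolyFun n → Prop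
  | base {f : PolyFun n} : f ∈ S → LieGen n S f
  | zero : LieGen n S 0
  | add {f g : PolyFun n} : LieGen n S f → LieGen n S g → LieGen n S (f + g)
  | smul (c : ℂ) {f : PolyFun n} : LieGen n S f → LieGen n S (c • f)
  | bracket {f g : PolyFun n} : LieGen n S f → LieGen n S g → LieGen n S (pbracket f g)

section S8
open MvPolynomial Matrix Finset
variable {n : ℕ}

noncomputable def dm (v : (Fin n × Fin n) ⊕ (Fin n × Fin n))
    (M : Matrix (Fin n) (Fin n) (PolyFun n)) : Matrix (Fin n) (Fin n) (PolyFun n) :=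
  Matrix.of fun a b => pderiv v (M a b)

lemma dm_mul (v) (M N : Matrix (Fin n) (Fin n) (PolyFun n)) :
    dm v (M * N) = dm v M * N + M * dm v N := by
  ext a b
  simp only [dm, Matrix.mul_apply, Matrix.of_apply, map_sum, pderiv_mul, Matrix.add_apply,
    Finset.sum_add_distrib]

lemma dm_one (v) : dm v (1 : Matrix (Fin n) (Fin n) (PolyFun n)) = 0 := by
  ext a b
  simp [dm, Matrix.one_apply, apply_ite (pderiv v)]

lemma dm_pow (v) (M : Matrix (Fin n) (Fin n) (PolyFun n)) :
    ∀ p : ℕ, dm v (M ^ p) = ∑ i ∈ range p, M ^ i * dm v M * M ^ (p - 1 - i)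
  | 0 => by simp [dm_one]
  | (p+1) => by
    rw [pow_succ, dm_mul, dm_pow v M p, Finset.sum_mul, Finset.sum_range_succ,
      Nat.add_sub_cancel]
    refine congrArg₂ (· + ·) ?_ ?_
    · refine Finset.sum_congr rfl fun i hi => ?_
      rw [mul_assoc, mul_assoc, ← pow_succ]
      have h2 : p - 1 - i + 1 = p - i := by
        have := Finset.mem_range.mp hi; omega
      rw [h2, mul_assoc]
    · rw [Nat.sub_self, pow_zero, mul_one]

lemma pderiv_trace (v) (M : Matrix (Fin n) (Fin n) (PolyFun n)) :
    pderiv v (Matrix.trace M) = Matrix.trace (dm v M) := by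
  simp [Matrix.trace, Matrix.diag, dm, map_sum]

lemma dm_smul_one (v) (f : PolyFun n) :
    dm v (f • (1 : Matrix (Fin n) (Fin n) (PolyFun n))) = pderiv v f • 1 := by
  ext a b
  simp [dm, Matrix.one_apply, mul_ite, mul_one, mul_zero, apply_ite (pderiv v)]

lemma dm_inl_X (j k : Fin n) : dm (Sum.inl (j,k)) (Xmat n) = single j k 1 := by
  ext a b
  simp only [dm, Xmat, Matrix.of_apply, pderiv_X, Pi.single_apply, Matrix.single]
  by_cases h : j = a ∧ k = b
  · obtain ⟨rfl, rfl⟩ := h; simp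
  · rw [if_neg h, if_neg]
    intro he
    apply h
    injection he with he'
    exact ⟨(Prod.ext_iff.mp he').1.symm, (Prod.ext_iff.mp he').2.symm⟩

lemma dm_inr_Y (j k : Fin n) : dm (Sum.inr (j,k)) (Ymat n) = single j k 1 := by
  ext a b
  simp only [dm, Ymat, Matrix.of_apply, pderiv_X, Pi.single_apply, Matrix.single]
  by_cases h : j = a ∧ k = b
  · obtain ⟨rfl, rfl⟩ := h; simp
  · rw [if_neg h, if_neg]
    intro he
    apply h
    injection he with he'
    exact ⟨(Prod.ext_iff.mp he').1.symm, (Prod.ext_iff.mp he').2.symm⟩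

lemma dm_inl_Y (v : Fin n × Fin n) : dm (Sum.inl v) (Ymat n) = 0 := by
  ext a b; simp [dm, Ymat]

lemma dm_inr_X (v : Fin n × Fin n) : dm (Sum.inr v) (Xmat n) = 0 := by
  ext a b; simp [dm, Xmat]

end S8

section S8b
open MvPolynomial Matrix Finset
variable {n : ℕ}

lemma trace_stdBasis_mul (j k : Fin n) (W : Matrix (Fin n) (Fin n) (PolyFun n)) :
    Matrix.trace (single j k 1 * W) = W k j := by
  rw [Matrix.trace]
  rw [Finset.sum_eq_single j]
  · simp [Matrix.diag, Matrix.single_mul_apply_same]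
  · intro b _ hb
    simp [Matrix.diag, Matrix.single_mul_apply_of_ne _ _ _ _ _ hb]
  · simp

lemma pderiv_inl_traceX (j k : Fin n) :
    pderiv (Sum.inl (j,k)) (Matrix.trace (Xmat n)) =
      (1 : Matrix (Fin n) (Fin n) (PolyFun n)) j k := by
  rw [pderiv_trace, dm_inl_X, Matrix.one_apply]
  rcases eq_or_ne j k with rfl | h
  · simp [Matrix.trace_single_eq_same]
  · simp [Matrix.trace_single_eq_of_ne (h := h), h]

lemma pderiv_inr_traceY (j k : Fin n) :
    pderiv (Sum.inr (j,k)) (Matrix.trace (Ymat n)) =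
      (1 : Matrix (Fin n) (Fin n) (PolyFun n)) j k := by
  rw [pderiv_trace, dm_inr_Y, Matrix.one_apply]
  rcases eq_or_ne j k with rfl | h
  · simp [Matrix.trace_single_eq_same]
  · simp [Matrix.trace_single_eq_of_ne (h := h), h]

lemma dm_sub (v) (M N : Matrix (Fin n) (Fin n) (PolyFun n)) :
    dm v (M - N) = dm v M - dm v N := by
  ext a b; simp [dm, Matrix.sub_apply]

lemma dm_inl_A (j k : Fin n) :
    dm (Sum.inl (j,k)) (Amat n) =
      single j k 1 -
        (C ((n:ℂ)⁻¹) * (1 : Matrix (Fin n) (Fin n) (PolyFun n)) j k) • 1 := by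
  rw [Amat, dm_sub, dm_inl_X, dm_smul_one, pderiv_C_mul, pderiv_inl_traceX]

lemma dm_inr_B (j k : Fin n) :
    dm (Sum.inr (j,k)) (Bmat n) =
      single j k 1 -
        (C ((n:ℂ)⁻¹) * (1 : Matrix (Fin n) (Fin n) (PolyFun n)) j k) • 1 := by
  rw [Bmat, dm_sub, dm_inr_Y, dm_smul_one, pderiv_C_mul, pderiv_inr_traceY]

lemma dm_inl_B (v : Fin n × Fin n) : dm (Sum.inl v) (Bmat n) = 0 := by
  rw [Bmat, dm_sub, dm_inl_Y, dm_smul_one]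
  have : pderiv (Sum.inl v) (C ((n:ℂ)⁻¹) * Matrix.trace (Ymat n)) = 0 := by
    rw [pderiv_C_mul, pderiv_trace, dm_inl_Y]
    simp
  rw [this]
  simp

lemma dm_inr_A (v : Fin n × Fin n) : dm (Sum.inr v) (Amat n) = 0 := by
  rw [Amat, dm_sub, dm_inr_X, dm_smul_one]
  have : pderiv (Sum.inr v) (C ((n:ℂ)⁻¹) * Matrix.trace (Xmat n)) = 0 := by
    rw [pderiv_C_mul, pderiv_trace, dm_inr_X]
    simp
  rw [this]
  simp

end S8b

section S8c
open MvPolynomial Matrix Finset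
variable {n : ℕ}

/-- Gradient of `trAB n p q` with respect to `X`. -/
noncomputable def GX (n p q : ℕ) : Matrix (Fin n) (Fin n) (PolyFun n) :=
  (∑ i ∈ range p, Amat n ^ (p - 1 - i) * Bmat n ^ q * Amat n ^ i) -
    ((p : PolyFun n) * C ((n:ℂ)⁻¹) * trAB n (p - 1) q) • 1

/-- Gradient of `trAB n p q` with respect to `Y`. -/
noncomputable def GY (n p q : ℕ) : Matrix (Fin n) (Fin n) (PolyFun n) :=
  (∑ i ∈ range q, Bmat n ^ (q - 1 - i) * Amat n ^ p * Bmat n ^ i) -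
    ((q : PolyFun n) * C ((n:ℂ)⁻¹) * trAB n p (q - 1)) • 1

lemma trace_D_mul (j k : Fin n) (c : PolyFun n) (M : Matrix (Fin n) (Fin n) (PolyFun n)) :
    Matrix.trace ((single j k 1 - c • (1 : Matrix (Fin n) (Fin n) (PolyFun n))) * M)
      = M k j - c * Matrix.trace M := by
  rw [Matrix.sub_mul, trace_sub, trace_stdBasis_mul, Matrix.smul_mul, Matrix.one_mul,
    trace_smul, smul_eq_mul]

lemma one_apply_comm (j k : Fin n) :
    (1 : Matrix (Fin n) (Fin n) (PolyFun n)) j k = (1 : Matrix (Fin n) (Fin n) (PolyFun n)) k j := by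
  rw [Matrix.one_apply, Matrix.one_apply]
  simp only [eq_comm]

lemma pderiv_inl_trAB (p q : ℕ) (j k : Fin n) :
    pderiv (Sum.inl (j,k)) (trAB n p q) = GX n p q k j := by
  rw [trAB, pderiv_trace, dm_mul]
  have hB : dm (Sum.inl (j,k)) (Bmat n ^ q) = 0 := by
    rw [dm_pow]
    refine Finset.sum_eq_zero fun i _ => ?_
    rw [dm_inl_B]
    simp
  rw [hB, Matrix.mul_zero, trace_add, trace_zero, add_zero, dm_pow, Finset.sum_mul, trace_sum]
  have key : ∀ i ∈ range p,
      Matrix.trace (Amat n ^ i * dm (Sum.inl (j,k)) (Amat n) * Amat n ^ (p - 1 - i) * Bmat n ^ q)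
        = (Amat n ^ (p - 1 - i) * Bmat n ^ q * Amat n ^ i) k j
          - (C ((n:ℂ)⁻¹) * (1 : Matrix (Fin n) (Fin n) (PolyFun n)) j k) * trAB n (p-1) q := by
    intro i hi
    have hpi : i + (p - 1 - i) = p - 1 := by
      have := Finset.mem_range.mp hi; omega
    have hcyc : Matrix.trace (Amat n ^ i * dm (Sum.inl (j,k)) (Amat n) * Amat n ^ (p - 1 - i) * Bmat n ^ q)
        = Matrix.trace (dm (Sum.inl (j,k)) (Amat n) * (Amat n ^ (p - 1 - i) * Bmat n ^ q * Amat n ^ i)) := by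
      rw [show Amat n ^ i * dm (Sum.inl (j,k)) (Amat n) * Amat n ^ (p - 1 - i) * Bmat n ^ q
          = Amat n ^ i * (dm (Sum.inl (j,k)) (Amat n) * (Amat n ^ (p - 1 - i) * Bmat n ^ q)) by
        simp only [Matrix.mul_assoc]]
      rw [trace_mul_comm]
      refine congrArg Matrix.trace ?_
      simp only [Matrix.mul_assoc]
    rw [hcyc, dm_inl_A, trace_D_mul]
    refine congrArg (HSub.hSub _) (congrArg (HMul.hMul _) ?_)
    rw [trace_mul_comm, ← Matrix.mul_assoc, ← pow_add, hpi, trAB]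
  rw [Finset.sum_congr rfl key, Finset.sum_sub_distrib, Finset.sum_const, card_range]
  rw [GX, Matrix.sub_apply, Matrix.sum_apply, Matrix.smul_apply, smul_eq_mul]
  congr 1
  rw [nsmul_eq_mul, one_apply_comm]
  ring

lemma pderiv_inr_trAB (p q : ℕ) (j k : Fin n) :
    pderiv (Sum.inr (j,k)) (trAB n p q) = GY n p q k j := by
  rw [trAB, pderiv_trace, dm_mul]
  have hA : dm (Sum.inr (j,k)) (Amat n ^ p) = 0 := by
    rw [dm_pow]
    refine Finset.sum_eq_zero fun i _ => ?_
    rw [dm_inr_A]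
    simp
  rw [hA, Matrix.zero_mul, trace_add, trace_zero, zero_add, dm_pow, Finset.mul_sum, trace_sum]
  have key : ∀ i ∈ range q,
      Matrix.trace (Amat n ^ p * (Bmat n ^ i * dm (Sum.inr (j,k)) (Bmat n) * Bmat n ^ (q - 1 - i)))
        = (Bmat n ^ (q - 1 - i) * Amat n ^ p * Bmat n ^ i) k j
          - (C ((n:ℂ)⁻¹) * (1 : Matrix (Fin n) (Fin n) (PolyFun n)) j k) * trAB n p (q-1) := by
    intro i hi
    have hqi : i + (q - 1 - i) = q - 1 := by
      have := Finset.mem_range.mp hi; omega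
    have hcyc : Matrix.trace (Amat n ^ p * (Bmat n ^ i * dm (Sum.inr (j,k)) (Bmat n) * Bmat n ^ (q - 1 - i)))
        = Matrix.trace (dm (Sum.inr (j,k)) (Bmat n) * (Bmat n ^ (q - 1 - i) * Amat n ^ p * Bmat n ^ i)) := by
      rw [show Amat n ^ p * (Bmat n ^ i * dm (Sum.inr (j,k)) (Bmat n) * Bmat n ^ (q - 1 - i))
          = (Amat n ^ p * Bmat n ^ i) * (dm (Sum.inr (j,k)) (Bmat n) * Bmat n ^ (q - 1 - i)) by
        simp only [Matrix.mul_assoc]]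
      rw [trace_mul_comm]
      refine congrArg Matrix.trace ?_
      simp only [Matrix.mul_assoc]
    rw [hcyc, dm_inr_B, trace_D_mul]
    refine congrArg (HSub.hSub _) (congrArg (HMul.hMul _) ?_)
    rw [trace_mul_comm, ← Matrix.mul_assoc, ← pow_add, hqi, trace_mul_comm, trAB]
  rw [Finset.sum_congr rfl key, Finset.sum_sub_distrib, Finset.sum_const, card_range]
  rw [GY, Matrix.sub_apply, Matrix.sum_apply, Matrix.smul_apply, smul_eq_mul]
  congr 1
  rw [nsmul_eq_mul, one_apply_comm]
  ring

lemma pbracket_trAB (p q r s : ℕ) :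
    pbracket (trAB n p q) (trAB n r s)
      = Matrix.trace (GX n p q * GY n r s) - Matrix.trace (GY n p q * GX n r s) := by
  have htr : ∀ M N : Matrix (Fin n) (Fin n) (PolyFun n),
      Matrix.trace (M * N) = ∑ j : Fin n, ∑ k : Fin n, M k j * N j k := by
    intro M N
    rw [Matrix.trace, Finset.sum_comm]
    simp [Matrix.diag, Matrix.mul_apply]
  rw [pbracket, htr, htr, ← Finset.sum_sub_distrib]
  refine Finset.sum_congr rfl fun j _ => ?_
  rw [← Finset.sum_sub_distrib]
  refine Finset.sum_congr rfl fun i _ => ?_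
  rw [pderiv_inl_trAB, pderiv_inr_trAB, pderiv_inl_trAB, pderiv_inr_trAB]

end S8c

section S8d
open MvPolynomial Matrix Finset
variable {n : ℕ}

lemma trace_one' : Matrix.trace (1 : Matrix (Fin n) (Fin n) (PolyFun n)) = (n : PolyFun n) := by
  rw [Matrix.trace_one]
  simp

lemma C_inv_mul_n (hn : (n:ℂ) ≠ 0) :
    (C ((n:ℂ)⁻¹) : PolyFun n) * (n : PolyFun n) = 1 := by
  rw [← map_natCast (C : ℂ →+* PolyFun n) n, ← _root_.map_mul, inv_mul_cancel₀ hn, _root_.map_one]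

lemma trace_Amat (hn : (n:ℂ) ≠ 0) : Matrix.trace (Amat n) = 0 := by
  rw [Amat, trace_sub, trace_smul, trace_one', smul_eq_mul, mul_assoc,
    mul_comm (Matrix.trace (Xmat n)), ← mul_assoc, C_inv_mul_n hn, one_mul, sub_self]

lemma trace_Bmat (hn : (n:ℂ) ≠ 0) : Matrix.trace (Bmat n) = 0 := by
  rw [Bmat, trace_sub, trace_smul, trace_one', smul_eq_mul, mul_assoc,
    mul_comm (Matrix.trace (Ymat n)), ← mul_assoc, C_inv_mul_n hn, one_mul, sub_self]

lemma trAB_A (p : ℕ) : trAB n p 0 = Matrix.trace (Amat n ^ p) := by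
  rw [trAB, pow_zero, Matrix.mul_one]

lemma trAB_B (q : ℕ) : trAB n 0 q = Matrix.trace (Bmat n ^ q) := by
  rw [trAB, pow_zero, Matrix.one_mul]

lemma trAB_10 (hn : (n:ℂ) ≠ 0) : trAB n 1 0 = 0 := by
  rw [trAB_A, pow_one, trace_Amat hn]

lemma trAB_01 (hn : (n:ℂ) ≠ 0) : trAB n 0 1 = 0 := by
  rw [trAB_B, pow_one, trace_Bmat hn]

lemma GX_zero (q : ℕ) : GX n 0 q = 0 := by
  simp [GX]

lemma GY_zero (p : ℕ) : GY n p 0 = 0 := by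
  simp [GY]

lemma GX_A (m : ℕ) : GX n (m+1) 0
    = (m+1 : ℕ) • Amat n ^ m - (((m+1 : ℕ) : PolyFun n) * C ((n:ℂ)⁻¹) * trAB n m 0) • 1 := by
  rw [GX]
  have h1 : ∀ i ∈ range (m+1), Amat n ^ (m+1-1-i) * Bmat n ^ 0 * Amat n ^ i = Amat n ^ m := by
    intro i hi
    rw [pow_zero, Matrix.mul_one, ← pow_add]
    congr 1
    have := Finset.mem_range.mp hi
    omega
  rw [Finset.sum_congr rfl h1, Finset.sum_const, card_range]
  norm_num

lemma GY_B (m : ℕ) : GY n 0 (m+1)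
    = (m+1 : ℕ) • Bmat n ^ m - (((m+1 : ℕ) : PolyFun n) * C ((n:ℂ)⁻¹) * trAB n 0 m) • 1 := by
  rw [GY]
  have h1 : ∀ i ∈ range (m+1), Bmat n ^ (m+1-1-i) * Amat n ^ 0 * Bmat n ^ i = Bmat n ^ m := by
    intro i hi
    rw [pow_zero, Matrix.mul_one, ← pow_add]
    congr 1
    have := Finset.mem_range.mp hi
    omega
  rw [Finset.sum_congr rfl h1, Finset.sum_const, card_range]
  norm_num

lemma GX_Q (hn : (n:ℂ) ≠ 0) : GX n 1 1 = Bmat n := by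
  rw [GX]
  simp [trAB_01 hn]

lemma GY_Q (hn : (n:ℂ) ≠ 0) : GY n 1 1 = Amat n := by
  rw [GY]
  simp [trAB_10 hn]

lemma GX_21 : GX n 2 1
    = Amat n * Bmat n + Bmat n * Amat n - ((2 : PolyFun n) * C ((n:ℂ)⁻¹) * trAB n 1 1) • 1 := by
  rw [GX, Finset.sum_range_succ, Finset.sum_range_one]
  norm_num [pow_one]

lemma GY_21 : GY n 2 1 = Amat n ^ 2 - (C ((n:ℂ)⁻¹) * trAB n 2 0) • 1 := by
  rw [GY, Finset.sum_range_one]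
  norm_num

lemma GX_12 : GX n 1 2 = Bmat n ^ 2 - (C ((n:ℂ)⁻¹) * trAB n 0 2) • 1 := by
  rw [GX, Finset.sum_range_one]
  norm_num

lemma GY_12 : GY n 1 2
    = Bmat n * Amat n + Amat n * Bmat n - ((2 : PolyFun n) * C ((n:ℂ)⁻¹) * trAB n 1 1) • 1 := by
  rw [GY, Finset.sum_range_succ, Finset.sum_range_one]
  norm_num [pow_one]

end S8d

section S8e
open MvPolynomial Matrix Finset
variable {n : ℕ}

lemma brI1 (hn : (n:ℂ) ≠ 0) (m : ℕ) :
    pbracket (trAB n 1 1) (trAB n (m+1) 0) = C (-(m+1) : ℂ) * trAB n (m+1) 0 := by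
  rw [pbracket_trAB, GX_Q hn, GY_Q hn, GY_zero, GX_A, Matrix.mul_zero, trace_zero]
  have h1 : Amat n * Amat n ^ m = Amat n ^ (m+1) * Bmat n ^ 0 := by
    rw [pow_zero, Matrix.mul_one, ← pow_succ']
  simp only [Matrix.mul_sub, Matrix.mul_smul, trace_sub, trace_smul, Matrix.mul_one, h1]
  rw [show Matrix.trace (Amat n ^ (m+1) * Bmat n ^ 0) = trAB n (m+1) 0 from rfl,
    trace_Amat hn]
  simp only [smul_eq_mul, nsmul_eq_mul, mul_zero, sub_zero, map_neg, map_add, map_natCast, _root_.map_one]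
  push_cast
  ring

lemma brI2 (hn : (n:ℂ) ≠ 0) (m : ℕ) :
    pbracket (trAB n (m+1) 0) (trAB n 1 1) = C ((m+1) : ℂ) * trAB n (m+1) 0 := by
  rw [pbracket_trAB, GX_Q hn, GY_Q hn, GY_zero, GX_A, Matrix.zero_mul, trace_zero]
  have h1 : Amat n ^ m * Amat n = Amat n ^ (m+1) * Bmat n ^ 0 := by
    rw [pow_zero, Matrix.mul_one, ← pow_succ]
  simp only [Matrix.sub_mul, Matrix.smul_mul, trace_sub, trace_smul, Matrix.one_mul, h1]
  rw [show Matrix.trace (Amat n ^ (m+1) * Bmat n ^ 0) = trAB n (m+1) 0 from rfl,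
    trace_Amat hn]
  simp only [smul_eq_mul, nsmul_eq_mul, mul_zero, sub_zero, map_neg, map_add, map_natCast, _root_.map_one]
  push_cast
  ring

lemma brI3 (hn : (n:ℂ) ≠ 0) (m : ℕ) :
    pbracket (trAB n 1 1) (trAB n 0 (m+1)) = C ((m+1) : ℂ) * trAB n 0 (m+1) := by
  rw [pbracket_trAB, GX_Q hn, GY_Q hn, GX_zero, GY_B, Matrix.mul_zero, trace_zero]
  have h1 : Bmat n * Bmat n ^ m = Amat n ^ 0 * Bmat n ^ (m+1) := by
    rw [pow_zero, Matrix.one_mul, ← pow_succ']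
  simp only [Matrix.mul_sub, Matrix.mul_smul, trace_sub, trace_smul, Matrix.mul_one, h1]
  rw [show Matrix.trace (Amat n ^ 0 * Bmat n ^ (m+1)) = trAB n 0 (m+1) from rfl,
    trace_Bmat hn]
  simp only [smul_eq_mul, nsmul_eq_mul, mul_zero, sub_zero, map_neg, map_add, map_natCast, _root_.map_one]
  push_cast
  ring

lemma brI4 (hn : (n:ℂ) ≠ 0) (m : ℕ) :
    pbracket (trAB n 0 (m+1)) (trAB n 1 1) = C (-(m+1) : ℂ) * trAB n 0 (m+1) := by
  rw [pbracket_trAB, GX_Q hn, GY_Q hn, GX_zero, GY_B, Matrix.zero_mul, trace_zero]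
  have h1 : Bmat n ^ m * Bmat n = Amat n ^ 0 * Bmat n ^ (m+1) := by
    rw [pow_zero, Matrix.one_mul, ← pow_succ]
  simp only [Matrix.sub_mul, Matrix.smul_mul, trace_sub, trace_smul, Matrix.one_mul, h1]
  rw [show Matrix.trace (Amat n ^ 0 * Bmat n ^ (m+1)) = trAB n 0 (m+1) from rfl,
    trace_Bmat hn]
  simp only [smul_eq_mul, nsmul_eq_mul, mul_zero, sub_zero, map_neg, map_add, map_natCast, _root_.map_one]
  push_cast
  ring

end S8e

section S8f
open MvPolynomial Matrix Finset
variable {n : ℕ}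

lemma trace_AB : Matrix.trace (Amat n * Bmat n) = trAB n 1 1 := by
  rw [trAB, pow_one, pow_one]

lemma trace_A2B : Matrix.trace (Amat n ^ 2 * Bmat n) = trAB n 2 1 := by
  rw [trAB, pow_one]

lemma brI5 (hn : (n:ℂ) ≠ 0) :
    pbracket (trAB n 2 0) (trAB n 0 2) = C (4 : ℂ) * trAB n 1 1 := by
  show pbracket (trAB n (1+1) 0) (trAB n 0 (1+1)) = C (4 : ℂ) * trAB n 1 1
  rw [pbracket_trAB, GY_zero, GX_zero, Matrix.mul_zero, trace_zero, GX_A, GY_B,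
    trAB_10 hn, trAB_01 hn]
  simp only [mul_zero, zero_smul, sub_zero, smul_mul_assoc, mul_smul_comm, trace_smul,
    pow_one, trace_AB]
  simp only [smul_eq_mul, nsmul_eq_mul, map_neg, map_ofNat]
  push_cast
  ring

lemma brI6 (hn : (n:ℂ) ≠ 0) :
    pbracket (trAB n 3 0) (trAB n 0 2) = C (6 : ℂ) * trAB n 2 1 := by
  show pbracket (trAB n (2+1) 0) (trAB n 0 (1+1)) = C (6 : ℂ) * trAB n 2 1
  rw [pbracket_trAB, GY_zero, GX_zero, Matrix.mul_zero, trace_zero, GX_A, GY_B, trAB_01 hn]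
  simp only [mul_zero, zero_smul, sub_zero, Matrix.sub_mul, smul_mul_assoc, mul_smul_comm,
    Matrix.one_mul, trace_sub, trace_smul, pow_one, trace_A2B, trace_Bmat hn,
    smul_zero, sub_zero]
  simp only [smul_eq_mul, nsmul_eq_mul, map_neg, map_ofNat]
  push_cast
  ring

lemma brI7 (hn : (n:ℂ) ≠ 0) :
    pbracket (trAB n 0 2) (trAB n 2 1) = C (-4 : ℂ) * trAB n 1 2 := by
  show pbracket (trAB n 0 (1+1)) (trAB n 2 1) = C (-4 : ℂ) * trAB n 1 2
  rw [pbracket_trAB, GX_zero, Matrix.zero_mul, trace_zero, GX_21, GY_B, trAB_01 hn]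
  have e1 : Matrix.trace (Bmat n * (Amat n * Bmat n)) = trAB n 1 2 := by
    rw [trace_mul_comm, trAB, pow_one, sq, ← Matrix.mul_assoc]
  have e2 : Matrix.trace (Bmat n * (Bmat n * Amat n)) = trAB n 1 2 := by
    rw [← Matrix.mul_assoc, trace_mul_comm, trAB, pow_one, sq]
  simp only [mul_zero, zero_smul, sub_zero, smul_mul_assoc, mul_smul_comm, Matrix.mul_sub,
    Matrix.mul_add, Matrix.mul_one, trace_sub, trace_add, trace_smul, pow_one, e1, e2,
    trace_Bmat hn, smul_zero]
  simp only [smul_eq_mul, nsmul_eq_mul, map_neg, map_ofNat]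
  push_cast
  ring

lemma brI8 (m : ℕ) :
    pbracket (trAB n 2 1) (trAB n (m+1) 0)
      = C (-(m+1) : ℂ) * trAB n (m+2) 0
        + C ((m+1) : ℂ) * ((2 * C ((n:ℂ)⁻¹) - C ((n:ℂ)⁻¹) * C ((n:ℂ)⁻¹) * (n : PolyFun n))
            * (trAB n 2 0 * trAB n m 0)) := by
  rw [pbracket_trAB, GY_zero, Matrix.mul_zero, trace_zero, GY_21, GX_A]
  have h1 : Amat n ^ 2 * Amat n ^ m = Amat n ^ (m+2) := by
    rw [← pow_add]; congr 1; omega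
  have h2 : Matrix.trace (Amat n ^ (m+2)) = trAB n (m+2) 0 := (trAB_A (m+2)).symm
  have h3 : Matrix.trace (Amat n ^ 2) = trAB n 2 0 := (trAB_A 2).symm
  have h4 : Matrix.trace (Amat n ^ m) = trAB n m 0 := (trAB_A m).symm
  simp only [Matrix.sub_mul, Matrix.mul_sub, smul_mul_assoc, mul_smul_comm, Matrix.mul_one,
    Matrix.one_mul, trace_sub, trace_smul, h1, h2, h3, h4, trace_one']
  simp only [smul_eq_mul, nsmul_eq_mul, map_neg, map_add, map_natCast, _root_.map_one]
  push_cast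
  ring

lemma brI9 (m : ℕ) :
    pbracket (trAB n 1 2) (trAB n 0 (m+1))
      = C ((m+1) : ℂ) * trAB n 0 (m+2)
        - C ((m+1) : ℂ) * ((2 * C ((n:ℂ)⁻¹) - C ((n:ℂ)⁻¹) * C ((n:ℂ)⁻¹) * (n : PolyFun n))
            * (trAB n 0 2 * trAB n 0 m)) := by
  rw [pbracket_trAB, GX_zero, Matrix.mul_zero, trace_zero, sub_zero, GX_12, GY_B]
  have h1 : Bmat n ^ 2 * Bmat n ^ m = Bmat n ^ (m+2) := by
    rw [← pow_add]; congr 1; omega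
  have h2 : Matrix.trace (Bmat n ^ (m+2)) = trAB n 0 (m+2) := (trAB_B (m+2)).symm
  have h3 : Matrix.trace (Bmat n ^ 2) = trAB n 0 2 := (trAB_B 2).symm
  have h4 : Matrix.trace (Bmat n ^ m) = trAB n 0 m := (trAB_B m).symm
  simp only [Matrix.sub_mul, Matrix.mul_sub, smul_mul_assoc, mul_smul_comm, Matrix.mul_one,
    Matrix.one_mul, trace_sub, trace_smul, h1, h2, h3, h4, trace_one']
  simp only [smul_eq_mul, nsmul_eq_mul, map_neg, map_add, map_natCast, _root_.map_one]
  push_cast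
  ring

lemma brI10 (a b : ℕ) : pbracket (trAB n a 0) (trAB n b 0) = 0 := by
  rw [pbracket_trAB, GY_zero, GY_zero]
  simp

lemma brI11 (a b : ℕ) : pbracket (trAB n 0 a) (trAB n 0 b) = 0 := by
  rw [pbracket_trAB, GX_zero, GX_zero]
  simp

lemma pbracket_mul_right (F G H : PolyFun n) :
    pbracket F (G * H) = G * pbracket F H + H * pbracket F G := by
  unfold pbracket
  rw [Finset.mul_sum, Finset.mul_sum, ← Finset.sum_add_distrib]
  refine Finset.sum_congr rfl fun j _ => ?_
  rw [Finset.mul_sum, Finset.mul_sum, ← Finset.sum_add_distrib]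
  refine Finset.sum_congr rfl fun i _ => ?_
  simp only [pderiv_mul]
  ring

lemma pbracket_mul_left (F G H : PolyFun n) :
    pbracket (F * G) H = F * pbracket G H + G * pbracket F H := by
  unfold pbracket
  rw [Finset.mul_sum, Finset.mul_sum, ← Finset.sum_add_distrib]
  refine Finset.sum_congr rfl fun j _ => ?_
  rw [Finset.mul_sum, Finset.mul_sum, ← Finset.sum_add_distrib]
  refine Finset.sum_congr rfl fun i _ => ?_
  simp only [pderiv_mul]
  ring

end S8f

section S8g
open MvPolynomial Matrix Finset
variable {n : ℕ}

local notation "V" => LieGen n (calF n)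

lemma memCmul (c : ℂ) {f : PolyFun n} (h : V f) : V (C c * f) := by
  have := LieGen.smul c h
  rwa [smul_eq_C_mul] at this

lemma mem_of_C_mul {c : ℂ} (hc : c ≠ 0) {f : PolyFun n} (h : V (C c * f)) : V f := by
  have := LieGen.smul c⁻¹ h
  rwa [smul_eq_C_mul, ← mul_assoc, ← _root_.map_mul, inv_mul_cancel₀ hc, _root_.map_one,
    one_mul] at this

lemma V_sub_helper {a b : PolyFun n} (h1 : V (a + b)) (h2 : V b) : V a := by
  have := LieGen.add h1 (LieGen.smul (-1 : ℂ) h2)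
  rwa [show a + b + (-1 : ℂ) • b = a from by
    rw [smul_eq_C_mul, map_neg, _root_.map_one]; ring] at this

lemma memP2 : V (trAB n 2 0) := LieGen.base (by simp [calF])
lemma memB2 : V (trAB n 0 2) := LieGen.base (by simp [calF])
lemma memP3 : V (trAB n 3 0) := LieGen.base (by simp [calF])
lemma memQ2 : V ((trAB n 1 1) ^ 2) := LieGen.base (by simp [calF])

lemma cast_succ_ne (m : ℕ) : ((m:ℂ) + 1) ≠ 0 := by
  have h : ((m+1 : ℕ) : ℂ) ≠ 0 := Nat.cast_ne_zero.mpr (Nat.succ_ne_zero m)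
  push_cast at h
  exact h

lemma memQ (hn : (n:ℂ) ≠ 0) : V (trAB n 1 1) := by
  have hb : V (pbracket (trAB n 2 0) (trAB n 0 2)) := LieGen.bracket memP2 memB2
  rw [brI5 hn] at hb
  exact mem_of_C_mul (by norm_num) hb

lemma memR2 (hn : (n:ℂ) ≠ 0) : V (trAB n 2 1) := by
  have hb : V (pbracket (trAB n 3 0) (trAB n 0 2)) := LieGen.bracket memP3 memB2
  rw [brI6 hn] at hb
  exact mem_of_C_mul (by norm_num) hb

lemma memAB2 (hn : (n:ℂ) ≠ 0) : V (trAB n 1 2) := by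
  have hb : V (pbracket (trAB n 0 2) (trAB n 2 1)) := LieGen.bracket memB2 (memR2 hn)
  rw [brI7 hn] at hb
  exact mem_of_C_mul (by norm_num) hb

lemma brQ2P (hn : (n:ℂ) ≠ 0) (m : ℕ) :
    pbracket ((trAB n 1 1) ^ 2) (trAB n (m+1) 0)
      = C (-2 * (m+1) : ℂ) * (trAB n 1 1 * trAB n (m+1) 0) := by
  rw [sq, pbracket_mul_left, brI1 hn]
  simp only [map_add, _root_.map_mul, map_ofNat, _root_.map_one, map_natCast, map_neg]
  ring

lemma brQ2B (hn : (n:ℂ) ≠ 0) (m : ℕ) :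
    pbracket ((trAB n 1 1) ^ 2) (trAB n 0 (m+1))
      = C (2 * (m+1) : ℂ) * (trAB n 1 1 * trAB n 0 (m+1)) := by
  rw [sq, pbracket_mul_left, brI3 hn]
  simp only [map_add, _root_.map_mul, map_ofNat, _root_.map_one, map_natCast, map_neg]
  ring

lemma brPQP (hn : (n:ℂ) ≠ 0) (j m : ℕ) :
    pbracket (trAB n (j+1) 0) (trAB n 1 1 * trAB n (m+1) 0)
      = C ((j+1 : ℂ)) * (trAB n (j+1) 0 * trAB n (m+1) 0) := by
  rw [pbracket_mul_right, brI2 hn, brI10]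
  simp only [map_add, _root_.map_mul, map_ofNat, _root_.map_one, map_natCast, map_neg]
  ring

lemma brBQB (hn : (n:ℂ) ≠ 0) (j m : ℕ) :
    pbracket (trAB n 0 (j+1)) (trAB n 1 1 * trAB n 0 (m+1))
      = C (-(j+1) : ℂ) * (trAB n 0 (j+1) * trAB n 0 (m+1)) := by
  rw [pbracket_mul_right, brI4 hn, brI11]
  simp only [map_add, _root_.map_mul, map_ofNat, _root_.map_one, map_natCast, map_neg]
  ring

lemma memQP (hn : (n:ℂ) ≠ 0) {m : ℕ} (h : V (trAB n (m+1) 0)) :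
    V (trAB n 1 1 * trAB n (m+1) 0) := by
  have hb : V (pbracket ((trAB n 1 1) ^ 2) (trAB n (m+1) 0)) := LieGen.bracket memQ2 h
  rw [brQ2P hn] at hb
  exact mem_of_C_mul (mul_ne_zero (by norm_num) (cast_succ_ne m)) hb

lemma memQB (hn : (n:ℂ) ≠ 0) {m : ℕ} (h : V (trAB n 0 (m+1))) :
    V (trAB n 1 1 * trAB n 0 (m+1)) := by
  have hb : V (pbracket ((trAB n 1 1) ^ 2) (trAB n 0 (m+1))) := LieGen.bracket memQ2 h
  rw [brQ2B hn] at hb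
  exact mem_of_C_mul (mul_ne_zero (by norm_num) (cast_succ_ne m)) hb

lemma memPP (hn : (n:ℂ) ≠ 0) {j m : ℕ} (hj : V (trAB n (j+1) 0)) (hm : V (trAB n (m+1) 0)) :
    V (trAB n (j+1) 0 * trAB n (m+1) 0) := by
  have hb : V (pbracket (trAB n (j+1) 0) (trAB n 1 1 * trAB n (m+1) 0)) :=
    LieGen.bracket hj (memQP hn hm)
  rw [brPQP hn] at hb
  exact mem_of_C_mul (cast_succ_ne j) hb

lemma memBB (hn : (n:ℂ) ≠ 0) {j m : ℕ} (hj : V (trAB n 0 (j+1))) (hm : V (trAB n 0 (m+1))) :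
    V (trAB n 0 (j+1) * trAB n 0 (m+1)) := by
  have hb : V (pbracket (trAB n 0 (j+1)) (trAB n 1 1 * trAB n 0 (m+1))) :=
    LieGen.bracket hj (memQB hn hm)
  rw [brBQB hn] at hb
  exact mem_of_C_mul (neg_ne_zero.mpr (cast_succ_ne j)) hb

lemma hK : (2 * C ((n:ℂ)⁻¹) - C ((n:ℂ)⁻¹) * C ((n:ℂ)⁻¹) * (n : PolyFun n) : PolyFun n)
    = C (2 * (n:ℂ)⁻¹ - (n:ℂ)⁻¹ * (n:ℂ)⁻¹ * n) := by
  rw [map_sub, _root_.map_mul, _root_.map_mul, _root_.map_mul, map_ofNat, map_natCast]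

lemma memP (hn : (n:ℂ) ≠ 0) : ∀ m : ℕ, V (trAB n (m+2) 0) := by
  intro m
  induction m using Nat.strong_induction_on with
  | _ m IH =>
    match m, IH with
    | 0, _ => exact memP2
    | 1, _ => exact memP3
    | (s+2), IH =>
      have h1 : V (trAB n (s+3) 0) := IH (s+1) (by omega)
      have h2 : V (trAB n (s+2) 0) := IH s (by omega)
      have hprod : V (trAB n 2 0 * trAB n (s+2) 0) :=
        memPP hn (j := 1) (m := s+1) memP2 h2
      have hb : V (pbracket (trAB n 2 1) (trAB n (s+2+1) 0)) :=
        LieGen.bracket (memR2 hn) h1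
      rw [brI8 (s+2), hK] at hb
      have hjunk : V (C ((((s+2 : ℕ)):ℂ) + 1)
          * (C (2 * (n:ℂ)⁻¹ - (n:ℂ)⁻¹ * (n:ℂ)⁻¹ * n) * (trAB n 2 0 * trAB n (s+2) 0))) :=
        memCmul _ (memCmul _ hprod)
      have hmain : V (C (-((((s+2 : ℕ)):ℂ) + 1)) * trAB n (s+2+2) 0) :=
        V_sub_helper hb hjunk
      exact mem_of_C_mul (neg_ne_zero.mpr (cast_succ_ne (s+2))) hmain

lemma memB (hn : (n:ℂ) ≠ 0) : ∀ m : ℕ, V (trAB n 0 (m+2)) := by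
  intro m
  induction m using Nat.strong_induction_on with
  | _ m IH =>
    match m, IH with
    | 0, _ => exact memB2
    | (s+1), IH =>
      have h1 : V (trAB n 0 (s+2)) := IH s (by omega)
      have hprod : V (trAB n 0 2 * trAB n 0 (s+1)) := by
        cases s with
        | zero =>
          simp only [zero_add, trAB_01 hn, mul_zero]
          exact LieGen.zero
        | succ r =>
          exact memBB hn (j := 1) (m := r+1) memB2 (IH r (by omega))
      have hb : V (pbracket (trAB n 1 2) (trAB n 0 (s+1+1))) :=
        LieGen.bracket (memAB2 hn) h1
      rw [brI9 (s+1), hK, sub_eq_add_neg] at hb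
      have hjunk : V (-(C ((((s+1 : ℕ)):ℂ) + 1)
          * (C (2 * (n:ℂ)⁻¹ - (n:ℂ)⁻¹ * (n:ℂ)⁻¹ * n) * (trAB n 0 2 * trAB n 0 (s+1))))) := by
        have h := memCmul (-((((s+1 : ℕ)):ℂ) + 1)) (memCmul
          (2 * (n:ℂ)⁻¹ - (n:ℂ)⁻¹ * (n:ℂ)⁻¹ * n) hprod)
        rwa [map_neg, neg_mul] at h
      have hmain : V (C ((((s+1 : ℕ)):ℂ) + 1) * trAB n 0 (s+1+2)) :=
        V_sub_helper hb hjunk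
      exact mem_of_C_mul (cast_succ_ne (s+1)) hmain

end S8g

/-- for all `j, k ≥ 2` there are `g, h ∈ Lie(ℱ)` such that `(tr A^j)²`
agrees with `g` and `(tr B^k)²` agrees with `h` at every point of `Ŝ_n`. -/
theorem stmt_8 (n : ℕ) (hn : 1 ≤ n) (j k : ℕ) (hj : 2 ≤ j) (hk : 2 ≤ k) :
    (∃ g : PolyFun n, LieGen n (calF n) g ∧
      ∀ P ∈ Shat n, evalP P.1 P.2 ((trAB n j 0) ^ 2) = evalP P.1 P.2 g) ∧
    (∃ h : PolyFun n, LieGen n (calF n) h ∧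
      ∀ P ∈ Shat n, evalP P.1 P.2 ((trAB n 0 k) ^ 2) = evalP P.1 P.2 h) := by
  have hn0 : (n:ℂ) ≠ 0 := Nat.cast_ne_zero.mpr (by omega)
  constructor
  · obtain ⟨a, rfl⟩ : ∃ a, j = a + 2 := ⟨j - 2, by omega⟩
    refine ⟨trAB n (a+2) 0 * trAB n (a+2) 0, ?_, fun P hP => by rw [sq]⟩
    exact memPP hn0 (j := a+1) (m := a+1) (memP hn0 a) (memP hn0 a)
  · obtain ⟨b, rfl⟩ : ∃ b, k = b + 2 := ⟨k - 2, by omega⟩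
    refine ⟨trAB n 0 (b+2) * trAB n 0 (b+2), ?_, fun P hP => by rw [sq]⟩
    exact memBB hn0 (j := b+1) (m := b+1) (memB hn0 b) (memB hn0 b)
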